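/- For every real ν ≥ 1 and every real z > 0, one has K_ν(z) > (Γ(ν)/2)·e^{−z}·(2/z)^ν, where Γ denotes the real Gamma function. -/

import Mathlib

open Real MeasureTheory

/-- Modified Bessel function of the second kind, via its integral representation. -/
noncomputable def besselK (ν z : ℝ) : ℝ :=
  ∫ t in Set.Ioi (0 : ℝ), Real.exp (-z * Real.cosh t) * Real.cosh (ν * t)

open Set in
/-- Key pointwise inequality. -/
lemma besselK_pointwise_aux (ν : ℝ) (hν : 1 ≤ ν) (t : ℝ) (ht : 0 < t) :
    (2:ℝ) ^ (ν-1) * ((Real.cosh t - 1) ^ (ν-1) * Real.sinh t) < Real.cosh (ν * t) := by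
  set s := Real.sinh (t/2) with hs
  set c := Real.cosh (t/2) with hc
  have hs0 : 0 < s := Real.sinh_pos_iff.mpr (by linarith)
  have hsc : s < c := Real.sinh_lt_cosh _
  have hc0 : 0 < c := lt_trans hs0 hsc
  have hcosh : Real.cosh t = c^2 + s^2 := by
    rw [show t = 2 * (t/2) by ring, Real.cosh_two_mul]
  have hsinh : Real.sinh t = 2 * s * c := by
    rw [show t = 2 * (t/2) by ring, Real.sinh_two_mul]
  have hcsq : c^2 = s^2 + 1 := Real.cosh_sq _
  have hexp : Real.exp t = (c + s)^2 := by
    rw [show t = 2 * (t/2) by ring, two_mul, Real.exp_add, ← Real.cosh_add_sinh]; ring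
  have h1 : Real.exp (ν * t) / 2 < Real.cosh (ν * t) := by
    rw [Real.cosh_eq]
    have := Real.exp_pos (-(ν*t))
    linarith
  have hνt : Real.exp (ν * t) = (c + s) ^ (2 * ν) := by
    rw [mul_comm ν t, Real.exp_mul, hexp, ← Real.rpow_natCast (c+s) 2,
      ← Real.rpow_mul (by positivity)]
    norm_num
  have hL : (2:ℝ) ^ (ν-1) * ((Real.cosh t - 1) ^ (ν-1) * Real.sinh t)
      = (2*s) ^ (2*ν) * (c/s) / 2 := by
    have h2s : Real.cosh t - 1 = 2 * s^2 := by rw [hcosh]; linarith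
    rw [h2s, hsinh, ← mul_assoc, ← Real.mul_rpow (by norm_num) (by positivity)]
    have h1 : (2:ℝ) * (2 * s^2) = (2*s)^2 := by ring
    rw [h1, ← Real.rpow_two, ← Real.rpow_mul (by positivity)]
    have h2s0 : (0:ℝ) < 2*s := by positivity
    have h2 : (2:ℝ) * (ν - 1) = 2*ν - 2 := by ring
    rw [h2, Real.rpow_sub h2s0, Real.rpow_two]
    field_simp
  rw [hL]
  refine lt_of_lt_of_le ?_ h1.le
  rw [hνt]
  have hb1 : (1:ℝ) < (c+s)/(2*s) := by
    rw [lt_div_iff₀ (by positivity)]; linarith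
  have key : c/s < ((c+s)/(2*s)) ^ (2*ν) := by
    have h2 : ((c+s)/(2*s)) ^ (2:ℝ) ≤ ((c+s)/(2*s)) ^ (2*ν) :=
      Real.rpow_le_rpow_of_exponent_le hb1.le (by linarith)
    refine lt_of_lt_of_le ?_ h2
    rw [Real.rpow_two, div_pow, lt_div_iff₀ (by positivity), div_mul_eq_mul_div, div_lt_iff₀ hs0]
    nlinarith [sq_nonneg (c - s)]
  have hfin : (2*s) ^ (2*ν) * (c/s) < (2*s) ^ (2*ν) * ((c+s)/(2*s)) ^ (2*ν) :=
    (mul_lt_mul_iff_right₀ (Real.rpow_pos_of_pos (by positivity) _)).mpr key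
  calc (2*s) ^ (2*ν) * (c/s) / 2 < (2*s) ^ (2*ν) * ((c+s)/(2*s)) ^ (2*ν) / 2 := by linarith
    _ = (c+s)^(2*ν) / 2 := by
        rw [← Real.mul_rpow (by positivity) (by positivity)]
        congr 2
        field_simp

open Set in
lemma besselK_integrable_aux (ν z : ℝ) (hν : 1 ≤ ν) (hz : 0 < z) :
    IntegrableOn (fun t => Real.exp (-z * Real.cosh t) * Real.cosh (ν * t)) (Ioi 0) := by
  obtain ⟨n, hn⟩ := exists_nat_ge (ν + 2)
  have hcont : Continuous (fun t => Real.exp (-z * Real.cosh t) * Real.cosh (ν * t)) := by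
    continuity
  refine Integrable.mono (g := fun t => (n.factorial * (2/z)^n) * Real.exp (-2 * t)) ?_
    hcont.aestronglyMeasurable ?_
  · exact (exp_neg_integrableOn_Ioi 0 (by norm_num)).const_mul _
  · filter_upwards [ae_restrict_mem measurableSet_Ioi] with t ht
    simp only [mem_Ioi] at ht
    have hν0 : 0 < ν := by linarith
    have h1 : Real.cosh (ν * t) ≤ Real.exp (ν * t) := by
      rw [Real.cosh_eq]
      have h := Real.exp_le_exp.mpr (show -(ν*t) ≤ ν*t by nlinarith)
      linarith
    have h2 : Real.exp (-z * Real.cosh t) ≤ n.factorial * (2/z)^n * Real.exp (-(n:ℝ) * t) := by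
      have hch : Real.exp t / 2 ≤ Real.cosh t := by
        rw [Real.cosh_eq]; have := (Real.exp_pos (-t)).le; linarith
      have hb : (z/2 * Real.exp t) ^ n / n.factorial ≤ Real.exp (z * Real.cosh t) := by
        refine le_trans (Real.pow_div_factorial_le_exp _ (by positivity) n) ?_
        apply Real.exp_le_exp.mpr
        nlinarith [Real.exp_pos t]
      have hb' : Real.exp (-z * Real.cosh t) ≤ n.factorial / (z/2 * Real.exp t) ^ n := by
        rw [neg_mul, Real.exp_neg, inv_le_iff_one_le_mul₀ (Real.exp_pos _)]
        rw [div_le_iff₀ (by positivity)] at hb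
        rw [div_mul_eq_mul_div, le_div_iff₀ (by positivity), one_mul]
        linarith [hb]
      refine hb'.trans (le_of_eq ?_)
      rw [mul_pow, div_pow, ← Real.exp_nat_mul, neg_mul, Real.exp_neg]
      rw [div_pow]
      rw [mul_assoc, ← div_eq_mul_inv]
      field_simp
    have hpos : (0:ℝ) < n.factorial * (2/z)^n := by positivity
    rw [Real.norm_eq_abs, abs_of_nonneg (by positivity)]
    calc Real.exp (-z * Real.cosh t) * Real.cosh (ν * t)
        ≤ (n.factorial * (2/z)^n * Real.exp (-(n:ℝ) * t)) * Real.exp (ν * t) := by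
          apply mul_le_mul h2 h1 (by positivity) (by positivity)
      _ = (n.factorial * (2/z)^n) * Real.exp ((ν - n) * t) := by
          rw [mul_assoc, ← Real.exp_add]; ring_nf
      _ ≤ (n.factorial * (2/z)^n) * Real.exp (-2 * t) := by
          apply mul_le_mul_of_nonneg_left _ hpos.le
          apply Real.exp_le_exp.mpr
          nlinarith
      _ ≤ ‖(n.factorial * (2/z)^n) * Real.exp (-2 * t)‖ := le_abs_self _

open Set in
theorem besselK_gt_gamma_bound (ν z : ℝ) (hν : 1 ≤ ν) (hz : 0 < z) :
    besselK ν z > (Real.Gamma ν / 2) * Real.exp (-z) * (2 / z) ^ ν := by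
  set f : ℝ → ℝ := fun t => z * (Real.cosh t - 1) with hf
  set g : ℝ → ℝ := fun x => Real.exp (-x) * x ^ (ν - 1) with hg
  set W : ℝ → ℝ := fun t => |z * Real.sinh t| • g (f t) with hW
  set F : ℝ → ℝ := fun t => Real.exp (-z * Real.cosh t) * Real.cosh (ν * t) with hF
  set c : ℝ := Real.exp (-z) * (2/z) ^ ν / 2 with hcdef
  have hderiv : ∀ x ∈ Ioi (0:ℝ), HasDerivWithinAt f (z * Real.sinh x) (Ioi 0) x := fun x _ =>
    (((Real.hasDerivAt_cosh x).sub_const 1).const_mul z).hasDerivWithinAt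
  have hinj : InjOn f (Ioi 0) := by
    intro a ha b hb hab
    have h1 : Real.cosh a = Real.cosh b := by
      have := mul_left_cancel₀ hz.ne' hab
      linarith
    have h2 : |a| = |b| := by
      by_contra h
      rcases lt_or_gt_of_ne h with h | h
      · exact absurd h1.ge (not_le.mpr (Real.cosh_lt_cosh.mpr h))
      · exact absurd h1.le (not_le.mpr (Real.cosh_lt_cosh.mpr h))
    rwa [abs_of_pos (mem_Ioi.mp ha), abs_of_pos (mem_Ioi.mp hb)] at h2
  have himg : f '' Ioi 0 = Ioi 0 := by
    ext x
    constructor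
    · rintro ⟨t, ht, rfl⟩
      have h1 : 1 < Real.cosh t := by
        have := Real.cosh_lt_cosh (x := 0) (y := t)
        simp only [Real.cosh_zero, abs_zero, abs_pos] at this
        exact this.mpr (ne_of_gt (mem_Ioi.mp ht))
      simp only [hf, mem_Ioi]
      nlinarith
    · intro hx
      have hx' : (0:ℝ) < x := mem_Ioi.mp hx
      refine ⟨2 * Real.arsinh (Real.sqrt (x / (2*z))), ?_, ?_⟩
      · have : 0 < Real.sqrt (x / (2*z)) := Real.sqrt_pos.mpr (by positivity)
        have := Real.arsinh_pos_iff.mpr this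
        simp only [mem_Ioi]; linarith
      · set u := Real.arsinh (Real.sqrt (x / (2*z)))
        have h1 : Real.sinh u = Real.sqrt (x/(2*z)) := Real.sinh_arsinh _
        have h2 : Real.cosh (2*u) = 2 * Real.sinh u ^ 2 + 1 := by
          rw [Real.cosh_two_mul, Real.cosh_sq]; ring
        simp only [hf, h2, h1, Real.sq_sqrt (by positivity : (0:ℝ) ≤ x/(2*z))]
        field_simp
        ring
  have hΓ : Real.Gamma ν = ∫ t in Ioi (0:ℝ), W t := by
    calc Real.Gamma ν = ∫ x in Ioi (0:ℝ), g x := Real.Gamma_eq_integral (by linarith)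
      _ = ∫ x in f '' Ioi (0:ℝ), g x := by rw [himg]
      _ = ∫ t in Ioi (0:ℝ), |z * Real.sinh t| • g (f t) :=
          integral_image_eq_integral_abs_deriv_smul measurableSet_Ioi hderiv hinj g
  have hIntW : IntegrableOn W (Ioi 0) := by
    rw [hW, ← integrableOn_image_iff_integrableOn_abs_deriv_smul measurableSet_Ioi hderiv hinj g,
      himg]
    exact Real.GammaIntegral_convergent (by linarith)
  have hIntF : IntegrableOn F (Ioi 0) := besselK_integrable_aux ν z hν hz
  have hIntcW : IntegrableOn (fun t => c * W t) (Ioi 0) := hIntW.const_mul c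
  -- RHS equals the integral of c * W
  have hRHS : (Real.Gamma ν / 2) * Real.exp (-z) * (2 / z) ^ ν = ∫ t in Ioi (0:ℝ), c * W t := by
    rw [MeasureTheory.integral_const_mul, ← hΓ, hcdef]
    ring
  -- pointwise strict inequality
  have hpt : ∀ t ∈ Ioi (0:ℝ), c * W t < F t := by
    intro t ht
    have ht' : 0 < t := mem_Ioi.mp ht
    have hsinh : 0 < Real.sinh t := Real.sinh_pos_iff.mpr ht'
    have hcosh1 : 1 < Real.cosh t := by
      have := Real.cosh_lt_cosh (x := 0) (y := t)
      simp only [Real.cosh_zero, abs_zero, abs_pos] at this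
      exact this.mpr ht'.ne'
    have heq : c * W t
        = Real.exp (-z * Real.cosh t) * ((2:ℝ)^(ν-1) * ((Real.cosh t - 1)^(ν-1) * Real.sinh t)) := by
      have e0 : |z * Real.sinh t| = z * Real.sinh t := abs_of_pos (by positivity)
      have e1 : Real.exp (-(z * (Real.cosh t - 1))) = Real.exp (-z * Real.cosh t) * Real.exp z := by
        rw [← Real.exp_add]; ring_nf
      have e2 : (z * (Real.cosh t - 1)) ^ (ν-1) = z^(ν-1) * (Real.cosh t - 1)^(ν-1) :=
        Real.mul_rpow hz.le (by linarith)
      have e3 : (2/z : ℝ) ^ ν = 2^ν / z^ν := Real.div_rpow (by norm_num) hz.le ν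
      have e4 : z ^ (ν-1) = z^ν / z := by rw [Real.rpow_sub hz, Real.rpow_one]
      have e5 : (2:ℝ) ^ (ν-1) = 2^ν / 2 := by
        rw [Real.rpow_sub (by norm_num), Real.rpow_one]
      have e6 : Real.exp (-z) * Real.exp z = 1 := by
        rw [← Real.exp_add, neg_add_cancel, Real.exp_zero]
      have hzν : (0:ℝ) < z ^ ν := Real.rpow_pos_of_pos hz ν
      simp only [hW, hg, hf, hcdef, smul_eq_mul, e0, e1, e2, e3, e4, e5]
      field_simp
      linear_combination ((Real.cosh t - 1)^(ν-1)) * e6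
    rw [heq]
    have hkey := besselK_pointwise_aux ν hν t ht'
    have hep : 0 < Real.exp (-z * Real.cosh t) := Real.exp_pos _
    calc Real.exp (-z * Real.cosh t) * ((2:ℝ)^(ν-1) * ((Real.cosh t - 1)^(ν-1) * Real.sinh t))
        < Real.exp (-z * Real.cosh t) * Real.cosh (ν * t) := by
          exact (mul_lt_mul_iff_right₀ hep).mpr hkey
      _ = F t := rfl
  -- strict integral inequality
  have hsub : Ioi (0:ℝ) ⊆ Function.support (fun t => F t - c * W t) ∩ Ioi 0 := by
    intro t ht
    exact ⟨ne_of_gt (sub_pos.mpr (hpt t ht)), ht⟩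
  have hIntdiff : IntegrableOn (fun t => F t - c * W t) (Ioi 0) := hIntF.sub hIntcW
  have hposint : 0 < ∫ t in Ioi (0:ℝ), (F t - c * W t) := by
    rw [setIntegral_pos_iff_support_of_nonneg_ae ?_ hIntdiff]
    · refine lt_of_lt_of_le ?_ (measure_mono hsub)
      simp [Real.volume_Ioi]
    · filter_upwards [ae_restrict_mem measurableSet_Ioi] with t ht
      exact sub_nonneg.mpr (hpt t ht).le
  have hsplit : ∫ t in Ioi (0:ℝ), (F t - c * W t)
      = (∫ t in Ioi (0:ℝ), F t) - ∫ t in Ioi (0:ℝ), c * W t :=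
    MeasureTheory.integral_sub hIntF hIntcW
  rw [hsplit] at hposint
  have : besselK ν z = ∫ t in Ioi (0:ℝ), F t := rfl
  rw [gt_iff_lt, hRHS, this]
  linarith
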